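/- Let G be a weighted undirected graph with a root r, and suppose every vertex v holds an estimate δ(v) obtained as δ(v) = min over sampled vertices v' reachable from v within √n hops of (d_G(r,v') + d_G^{(√n)}(v',v)), where r itself is sampled. Under event 𝒜 (every canonical shortest path segment of ≥√n hops contains a sampled internal vertex), δ(v) = d_G(r,v) for every vertex v reachable from r. -/

import Mathlib

open scoped ENNReal

namespace Stmt11

variable {V : Type*}

/-- Endpoint of a walk starting at `u` with subsequent vertices given by the list. -/
def last : V → List V → V
  | u, [] => u
  | _, x :: xs => last x xs

/-- Weight of a walk starting at `u` with subsequent vertices given by the list. -/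
noncomputable def cost (w : V → V → ℝ≥0∞) : V → List V → ℝ≥0∞
  | _, [] => 0
  | u, x :: xs => w u x + cost w x xs

/-- `h`-hop-limited distance from `u` to `v` (non-edges have weight `⊤`). -/
noncomputable def hdist (w : V → V → ℝ≥0∞) (h : ℕ) (u v : V) : ℝ≥0∞ :=
  ⨅ p ∈ {p : List V | p.length ≤ h ∧ last u p = v}, cost w u p

/-- Shortest-path distance from `u` to `v`. -/
noncomputable def dist (w : V → V → ℝ≥0∞) (u v : V) : ℝ≥0∞ :=
  ⨅ h : ℕ, hdist w h u v

/-- `S` is a set of (at most) `k` closest reachable vertices to `v` (excluding `v`),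
with ties broken arbitrarily: members of `S` are reachable and distinct from `v`,
`|S| ≤ k`, every member is at least as close as every reachable non-member, and `S`
has exactly `k` elements unless it already contains all reachable vertices. -/
def IsKClosest [Fintype V] (w : V → V → ℝ≥0∞) (k : ℕ) (v : V) (S : Finset V) : Prop :=
  (∀ u ∈ S, u ≠ v ∧ dist w v u < ⊤) ∧ S.card ≤ k ∧
  (∀ y ∈ S, ∀ z, z ∉ S → z ≠ v → dist w v z < ⊤ → dist w v y ≤ dist w v z) ∧
  (∀ z, z ∉ S → z ≠ v → dist w v z < ⊤ → S.card = k)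

/-- Weight function of the union `G ∪ G^(k)` of the graph with the `k`-shortcut hopset:
hopset edges `(u,v)` (present when `u ∈ S v` or `v ∈ S u`) get weight `d_G(u,v)`. -/
noncomputable def unionW [Fintype V] [DecidableEq V] (w : V → V → ℝ≥0∞) (S : V → Finset V)
    (u v : V) : ℝ≥0∞ :=
  if u ∈ S v ∨ v ∈ S u then min (w u v) (dist w u v) else w u v


/-- `p` is the canonical `i`-hop-limited shortest `u`–`v` path: it has at most `i`
edges, ends at `v`, has minimum weight (equal to the `i`-limited distance), and among
such paths it has the fewest edges and is lexicographically smallest with respect to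
the vertex identifiers `ids` (comparing vertex sequences from the tail `u`). -/
def CanonicalPath (w : V → V → ℝ≥0∞) (ids : V → ℕ) (i : ℕ) (u v : V) (p : List V) : Prop :=
  p.length ≤ i ∧ last u p = v ∧ cost w u p = hdist w i u v ∧
  ∀ q : List V, q.length ≤ i → last u q = v → cost w u q = hdist w i u v →
    p.length ≤ q.length ∧
    (p.length = q.length → ¬ List.Lex (· < ·) ((u :: q).map ids) ((u :: p).map ids))

lemma last_append (u : V) (a b : List V) : last u (a ++ b) = last (last u a) b := by
  induction a generalizing u with
  | nil => rfl
  | cons x xs ih => simpa [last] using ih x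

lemma cost_append (w : V → V → ℝ≥0∞) (u : V) (a b : List V) :
    cost w u (a ++ b) = cost w u a + cost w (last u a) b := by
  induction a generalizing u with
  | nil => simp [cost, last]
  | cons x xs ih => simp [cost, last, ih x, add_assoc]

lemma hdist_le_cost (w : V → V → ℝ≥0∞) (h : ℕ) (u v : V) (p : List V)
    (hl : p.length ≤ h) (he : last u p = v) : hdist w h u v ≤ cost w u p :=
  iInf₂_le p ⟨hl, he⟩

lemma dist_le_hdist (w : V → V → ℝ≥0∞) (h : ℕ) (u v : V) :
    dist w u v ≤ hdist w h u v := iInf_le _ h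

lemma dist_self (w : V → V → ℝ≥0∞) (u : V) : dist w u u = 0 := by
  refine le_antisymm ?_ zero_le
  exact le_trans (dist_le_hdist w 0 u u) (hdist_le_cost w 0 u u [] le_rfl rfl)

lemma dist_last_le (w : V → V → ℝ≥0∞) (r u : V) (a : List V) :
    dist w r (last u a) ≤ dist w r u + cost w u a := by
  conv_rhs => rw [dist, ENNReal.iInf_add]
  refine le_iInf fun h => ?_
  conv_rhs => rw [hdist, iInf_subtype', ENNReal.iInf_add]
  refine le_iInf fun ⟨p, hl, he⟩ => ?_
  calc dist w r (last u a) ≤ hdist w (h + a.length) r (last u a) :=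
        dist_le_hdist _ _ _ _
    _ ≤ cost w r (p ++ a) := by
        refine hdist_le_cost _ _ _ _ _ (by simp [Nat.add_le_add_right hl]) ?_
        rw [last_append, he]
    _ = cost w r p + cost w u a := by rw [cost_append, he]

lemma dist_le_add_hdist (w : V → V → ℝ≥0∞) (r u v : V) (h : ℕ) :
    dist w r v ≤ dist w r u + hdist w h u v := by
  conv_rhs => rw [hdist, iInf_subtype', ENNReal.add_iInf]
  refine le_iInf fun ⟨p, hl, he⟩ => ?_
  have := dist_last_le w r u p
  rw [he] at this
  exact this

/-- Under event 𝒜, if every vertex `v` holds the estimate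
`δ(v) = min over sampled v' of (d_G(r,v') + d_G^{(√n)}(v',v))`, where the root `r`
is itself sampled, then `δ(v) = d_G(r,v)` for every vertex `v` reachable from `r`. -/
theorem final_estimates_correct [Fintype V] [DecidableEq V]
    (w : V → V → ℝ≥0∞) (hsymm : ∀ u v, w u v = w v u)
    (n : ℕ) (hn : n = Fintype.card V)
    (ids : V → ℕ) (hids : Function.Injective ids)
    (P : ℕ → V → V → List V)
    (hP : ∀ i u v, hdist w i u v < ⊤ → CanonicalPath w ids i u v (P i u v))
    (V' : Finset V)
    (hA : ∀ i u v, hdist w i u v < ⊤ → Nat.sqrt n ≤ (P i u v).length →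
      ∃ x ∈ (P i u v).dropLast, x ∈ V')
    (r : V) (hr : r ∈ V')
    (δ : V → ℝ≥0∞)
    (hδ : ∀ v, δ v = ⨅ v' ∈ V', dist w r v' + hdist w (Nat.sqrt n) v' v) :
    ∀ v, dist w r v < ⊤ → δ v = dist w r v := by
  intro v _
  refine le_antisymm ?_ ?_
  · -- upper bound: δ v ≤ dist r v
    have key : ∀ L : ℕ, ∀ i : ℕ, ∀ u : V, u ∈ V' → hdist w i u v < ⊤ →
        (P i u v).length ≤ L → δ v ≤ dist w r u + hdist w i u v := by
      intro L
      induction L using Nat.strong_induction_on with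
      | _ L IH =>
        intro i u huV hlt hlen
        obtain ⟨hpl, hplast, hpcost, -⟩ := hP i u v hlt
        set p := P i u v with hp
        by_cases hcase : p.length ≤ Nat.sqrt n
        · calc δ v ≤ dist w r u + hdist w (Nat.sqrt n) u v := by
                rw [hδ]; exact iInf₂_le u huV
            _ ≤ dist w r u + cost w u p :=
                add_le_add le_rfl (hdist_le_cost w _ u v p hcase hplast)
            _ = dist w r u + hdist w i u v := by rw [hpcost]
        · push_neg at hcase
          obtain ⟨x, hxmem, hxV⟩ := hA i u v hlt (le_of_lt hcase)
          have hpne : p ≠ [] := by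
            intro hnil
            rw [hnil] at hcase; simp at hcase
          obtain ⟨s, t, hst⟩ := List.append_of_mem hxmem
          have hdecomp : p = (s ++ [x]) ++ (t ++ [p.getLast hpne]) := by
            conv_lhs => rw [← List.dropLast_append_getLast hpne, hst]
            simp
          set a' : List V := s ++ [x] with ha'
          set b' : List V := t ++ [p.getLast hpne] with hb'
          have hlastx : last u a' = x := by
            rw [ha', last_append]; rfl
          have hlastb : last x b' = v := by
            have := hplast
            rw [hdecomp, last_append, hlastx] at this
            exact this
          have hcostsplit : cost w u p = cost w u a' + cost w x b' := by
            conv_lhs => rw [hdecomp]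
            rw [cost_append, hlastx]
          have hfin2 : cost w u a' + cost w x b' < ⊤ := by
            rw [← hcostsplit, hpcost]; exact hlt
          have hbfin : hdist w b'.length x v < ⊤ :=
            lt_of_le_of_lt (hdist_le_cost w _ x v b' le_rfl hlastb)
              (lt_of_le_of_lt le_add_self hfin2)
          have hblt : b'.length < p.length := by
            conv_rhs => rw [hdecomp]
            simp [ha']
            omega
          obtain ⟨hql, -, -, -⟩ := hP b'.length x v hbfin
          have hIH := IH b'.length (lt_of_lt_of_le hblt hlen) b'.length x hxV hbfin hql
          calc δ v ≤ dist w r x + hdist w b'.length x v := hIH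
            _ ≤ (dist w r u + cost w u a') + cost w x b' := by
                refine add_le_add ?_ (hdist_le_cost w _ x v b' le_rfl hlastb)
                rw [← hlastx]; exact dist_last_le w r u a'
            _ = dist w r u + cost w u p := by rw [hcostsplit, add_assoc]
            _ = dist w r u + hdist w i u v := by rw [hpcost]
    rw [dist]
    refine le_iInf fun h => ?_
    by_cases hfin : hdist w h r v < ⊤
    · have := key (P h r v).length h r hr hfin le_rfl
      rwa [dist_self, zero_add] at this
    · exact le_trans le_top (not_lt.mp hfin)
  · -- lower bound
    rw [hδ]
    exact le_iInf₂ fun v' _ => dist_le_add_hdist w r v' v (Nat.sqrt n)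

end Stmt11
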